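/- Let P > 0, σ > 0, and let D = (D₁,…,D_n) be a random vector with independent coordinates D_j ~ N(0, 2P). Let Q(x) = 1 − Φ(x) denote the standard Gaussian upper tail function. Then E[ Q( ‖D‖₂ / (2σ) ) ] ≤ (1 + P/(2σ²))^{−n/2}. -/

import Mathlib

open MeasureTheory ProbabilityTheory Real NNReal

/-- The standard Gaussian upper tail function
`Q(x) = 1 − Φ(x) = (1/√(2π))·∫ₓ^∞ e^{−t²/2} dt`. -/
noncomputable def gaussQ (x : ℝ) : ℝ := (gaussianReal 0 1 (Set.Ioi x)).toReal

lemma gaussQ_le_exp {x : ℝ} (hx : 0 ≤ x) : gaussQ x ≤ Real.exp (-x ^ 2 / 2) := by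
  have h1 : gaussQ x = ∫ t in Set.Ioi x, gaussianPDFReal 0 1 t := by
    rw [gaussQ, gaussianReal_apply_eq_integral 0 one_ne_zero,
      ENNReal.toReal_ofReal (setIntegral_nonneg measurableSet_Ioi fun t _ =>
        gaussianPDFReal_nonneg _ _ _)]
  rw [h1]
  have h2 : ∫ t in Set.Ioi x, gaussianPDFReal 0 1 t
      ≤ ∫ t in Set.Ioi x, Real.exp (-x ^ 2 / 2) * gaussianPDFReal x 1 t := by
    apply setIntegral_mono_on
    · exact (integrable_gaussianPDFReal 0 1).restrict
    · exact ((integrable_gaussianPDFReal x 1).const_mul _).restrict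
    · exact measurableSet_Ioi
    · intro t ht
      simp only [Set.mem_Ioi] at ht
      simp only [gaussianPDFReal, sub_zero, NNReal.coe_one, mul_one]
      rw [mul_comm (Real.exp (-x ^ 2 / 2)), mul_assoc, ← Real.exp_add]
      refine mul_le_mul_of_nonneg_left (Real.exp_le_exp.mpr ?_) (by positivity)
      nlinarith [sq_nonneg (t - x), mul_nonneg hx (sub_nonneg.mpr ht.le)]
  refine h2.trans ?_
  rw [integral_const_mul]
  have h3 : ∫ t in Set.Ioi x, gaussianPDFReal x 1 t ≤ 1 := by
    rw [← integral_gaussianPDFReal_eq_one x one_ne_zero]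
    exact setIntegral_le_integral (integrable_gaussianPDFReal x 1)
      (ae_of_all _ fun t => gaussianPDFReal_nonneg _ _ _)
  calc Real.exp (-x ^ 2 / 2) * ∫ t in Set.Ioi x, gaussianPDFReal x 1 t
      ≤ Real.exp (-x ^ 2 / 2) * 1 := by
        exact mul_le_mul_of_nonneg_left h3 (Real.exp_pos _).le
    _ = Real.exp (-x ^ 2 / 2) := mul_one _

lemma integral_exp_neg_mul_sq_gaussianReal {v : ℝ≥0} (hv : v ≠ 0) {c : ℝ} (hc : 0 < c) :
    ∫ x, Real.exp (-c * x ^ 2) ∂(gaussianReal 0 v) = (Real.sqrt (1 + 2 * c * v))⁻¹ := by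
  have hv' : (0 : ℝ) < v := by
    have := hv
    positivity
  have hden : (0 : ℝ) < c + (2 * v)⁻¹ := by positivity
  have hmeas : Measurable fun x => (gaussianPDFReal 0 v x).toNNReal :=
    (measurable_gaussianPDFReal 0 v).real_toNNReal
  have hrw : gaussianReal 0 v
      = volume.withDensity (fun x => ((fun x => (gaussianPDFReal 0 v x).toNNReal) x : ENNReal)) := by
    rw [gaussianReal_of_var_ne_zero 0 hv]
    congr 1
  rw [hrw, integral_withDensity_eq_integral_smul hmeas]
  simp only [NNReal.smul_def, Real.coe_toNNReal _ (gaussianPDFReal_nonneg 0 v _), smul_eq_mul]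
  simp only [gaussianPDFReal, sub_zero]
  simp_rw [mul_assoc, ← Real.exp_add]
  have hexp : ∀ x : ℝ, -x ^ 2 / (2 * (v : ℝ)) + -c * x ^ 2 = -(c + (2 * (v : ℝ))⁻¹) * x ^ 2 := by
    intro x
    field_simp
    ring
  simp_rw [hexp]
  rw [integral_const_mul, integral_gaussian]
  rw [← Real.sqrt_inv, ← Real.sqrt_inv, ← Real.sqrt_mul (by positivity)]
  congr 1
  have hpi : (0 : ℝ) < π := Real.pi_pos
  field_simp
  ring

theorem stmt_11 (n : ℕ) (P σ : ℝ) (hP : 0 < P) (hσ : 0 < σ) :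
    ∫ d, gaussQ (Real.sqrt (∑ j, (d j) ^ 2) / (2 * σ))
        ∂(Measure.pi fun _ : Fin n => gaussianReal 0 (2 * P).toNNReal)
      ≤ (1 + P / (2 * σ ^ 2)) ^ (-(n : ℝ) / 2) := by
  have hvco : ((2 * P).toNNReal : ℝ) = 2 * P := Real.coe_toNNReal _ (by positivity)
  have hv : (2 * P).toNNReal ≠ 0 := by
    simp only [ne_eq, Real.toNNReal_eq_zero, not_le]
    positivity
  set c : ℝ := (8 * σ ^ 2)⁻¹ with hc_def
  have hc : 0 < c := by positivity
  have hA : (0 : ℝ) < 1 + P / (2 * σ ^ 2) := by positivity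
  have hpt : ∀ d : Fin n → ℝ,
      gaussQ (Real.sqrt (∑ j, (d j) ^ 2) / (2 * σ)) ≤ ∏ j, Real.exp (-c * (d j) ^ 2) := by
    intro d
    have hS : 0 ≤ ∑ j, (d j) ^ 2 := Finset.sum_nonneg fun j _ => sq_nonneg _
    refine (gaussQ_le_exp (by positivity)).trans_eq ?_
    rw [← Real.exp_sum]
    congr 1
    have hsum : ∑ j, -c * (d j) ^ 2 = -c * ∑ j, (d j) ^ 2 := by
      rw [Finset.mul_sum]
    rw [hsum, div_pow, Real.sq_sqrt hS, hc_def]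
    field_simp
    ring
  have hint1 : Integrable (fun x : ℝ => Real.exp (-c * x ^ 2))
      (gaussianReal 0 (2 * P).toNNReal) := by
    refine (integrable_const (1 : ℝ)).mono' ?_ ?_
    · exact (Real.continuous_exp.comp (by continuity)).aestronglyMeasurable
    · refine ae_of_all _ fun x => ?_
      rw [Real.norm_eq_abs, abs_of_pos (Real.exp_pos _)]
      refine Real.exp_le_one_iff.mpr ?_
      nlinarith [sq_nonneg x]
  letI : MeasureSpace ℝ := ⟨gaussianReal 0 (2 * P).toNNReal⟩
  haveI : SigmaFinite (volume : Measure ℝ) :=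
    inferInstanceAs (SigmaFinite (gaussianReal 0 (2 * P).toNNReal))
  have hprod_int : Integrable (fun d : Fin n → ℝ => ∏ j, Real.exp (-c * (d j) ^ 2))
      (Measure.pi fun _ : Fin n => gaussianReal 0 (2 * P).toNNReal) :=
    Integrable.fintype_prod (f := fun _ x => Real.exp (-c * x ^ 2)) fun _ => hint1
  refine (integral_mono_of_nonneg (ae_of_all _ fun d => ENNReal.toReal_nonneg)
    hprod_int (ae_of_all _ hpt)).trans ?_
  rw [show Measure.pi (fun _ : Fin n => gaussianReal 0 (2 * P).toNNReal)
      = (volume : Measure (Fin n → ℝ)) from rfl]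
  erw [MeasureTheory.integral_fintype_prod_eq_pow (ι := Fin n) (fun x => Real.exp (-c * x ^ 2)) (μ := volume)]
  rw [show (volume : Measure ℝ) = gaussianReal 0 (2 * P).toNNReal from rfl]
  rw [integral_exp_neg_mul_sq_gaussianReal hv hc]
  have h2cv : 1 + 2 * c * ((2 * P).toNNReal : ℝ) = 1 + P / (2 * σ ^ 2) := by
    rw [hvco, hc_def]
    field_simp
    ring
  rw [Fintype.card_fin, h2cv]
  have hsqrt : (Real.sqrt (1 + P / (2 * σ ^ 2)))⁻¹
      = (1 + P / (2 * σ ^ 2)) ^ (-(1 : ℝ) / 2) := by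
    rw [Real.sqrt_eq_rpow, ← Real.rpow_neg hA.le]
    norm_num
  rw [hsqrt, ← Real.rpow_natCast ((1 + P / (2 * σ ^ 2)) ^ (-(1 : ℝ) / 2)) n,
    ← Real.rpow_mul hA.le]
  apply le_of_eq
  congr 1
  push_cast
  ring
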